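/- Let UT_2(ℚ) denote the ring of upper triangular 2×2 matrices over ℚ, and let I be the two-sided ideal of the free unital associative ℤ-algebra ℤ⟨x_1,x_2,…⟩ on countably many generators generated by all elements (ab − ba)(cd − dc) with a,b,c,d ∈ ℤ⟨x_1,x_2,…⟩ (i.e., all substitution instances of [x_1,x_2][x_3,x_4]). Then for every n ≥ 1, P_n(ℤ) ∩ Id(UT_2(ℚ),ℤ) = P_n(ℤ) ∩ I. In other words, the multilinear polynomial identities of UT_2(ℚ) as a ring are exactly the multilinear consequences of [x,y][z,t] ≡ 0. -/

import Mathlib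

/-- The free unital associative ring `ℤ⟨x_1, x_2, …⟩` on countably many
(0-indexed) variables. -/
abbrev FA : Type := FreeAlgebra ℤ ℕ

/-- The variable `x_{i+1}` (0-indexed: `X i`). -/
noncomputable def X (i : ℕ) : FA := FreeAlgebra.ι ℤ i

/-- `P_n(ℤ)`: the additive subgroup of `ℤ⟨X⟩` generated by the multilinear monomials
`x_{σ(1)} x_{σ(2)} ⋯ x_{σ(n)}`, `σ ∈ S_n` (variables 0-indexed). -/
noncomputable def Pn (n : ℕ) : AddSubgroup FA :=
  AddSubgroup.closure
    {w | ∃ σ : Equiv.Perm (Fin n), w = (List.ofFn fun i => X (σ i)).prod}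

/-- `Id(R, ℤ)` (inside the free algebra): the elements vanishing under every
substitution of elements of `R` for the variables. -/
noncomputable def IdA (R : Type*) [Ring R] : AddSubgroup FA where
  carrier := {f | ∀ v : ℕ → R, FreeAlgebra.lift ℤ v f = 0}
  zero_mem' := fun v => map_zero _
  add_mem' := fun hf hg v => by rw [map_add, hf v, hg v, add_zero]
  neg_mem' := fun hf v => by rw [map_neg, hf v, neg_zero]

/-- Left-normed iterated commutator: `commList a [b₁, …, b_k] = [a, b₁, …, b_k]`
(`commList a [] = a`), where `[a,b] = ab - ba`. -/
def commList {A : Type*} [NonUnitalRing A] : A → List A → A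
  | a, [] => a
  | a, b :: l => commList (a * b - b * a) l

/-- The left-normed long commutator `[x_{i₁}, …, x_{i_k}]` of a list of variable
indices (junk value `0` for the empty list). -/
noncomputable def lcWord : List ℕ → FA
  | [] => 0
  | a :: l => commList (X a) l

/-- `Γ_n(ℤ)`: the additive subgroup of `P_n(ℤ)` generated by the proper multilinear
polynomials: products `c₁ c₂ ⋯ c_r` of long commutators (each of length ≥ 2) in which
each of the `n` variables occurs exactly once. -/
noncomputable def Gamma (n : ℕ) : AddSubgroup FA :=
  AddSubgroup.closure
    {w | ∃ L : List (List (Fin n)),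
      (∀ l ∈ L, 2 ≤ l.length) ∧ L.flatten.Perm (List.finRange n) ∧
      w = (L.map fun l => lcWord (l.map Fin.val)).prod}

/-- The two-sided ideal of the (unital) ring `FA` generated by a set `S`:
the additive subgroup generated by all products `a * s * b`, `s ∈ S`. -/
noncomputable def tsIdeal (S : Set FA) : AddSubgroup FA :=
  AddSubgroup.closure {w | ∃ a s b : FA, s ∈ S ∧ w = a * s * b}

/-- Renaming of variables: the endomorphism of `FA` sending `x_i ↦ x_{π(i)}` for the
first `n` variables (and fixing the remaining ones), for `π ∈ S_n`. -/
noncomputable def rename {n : ℕ} (π : Equiv.Perm (Fin n)) : FA →ₐ[ℤ] FA :=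
  FreeAlgebra.lift ℤ (fun i => if h : i < n then X (π ⟨i, h⟩) else X i)

/-- The ring of upper triangular `2 × 2` matrices over `S`, as a subring of `M_2(S)`. -/
def UT2 (S : Type*) [CommRing S] : Subring (Matrix (Fin 2) (Fin 2) S) where
  carrier := {M | M 1 0 = 0}
  zero_mem' := rfl
  one_mem' := Matrix.one_apply_ne (by decide)
  add_mem' := by
    intro a b ha hb
    show (a + b) 1 0 = 0
    simp only [Matrix.add_apply]
    rw [ha, hb, add_zero]
  neg_mem' := by
    intro a ha
    show (-a) 1 0 = 0
    simp only [Matrix.neg_apply]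
    rw [ha, neg_zero]
  mul_mem' := by
    intro a b ha hb
    show (a * b) 1 0 = 0
    rw [Matrix.mul_apply, Fin.sum_univ_two, ha, hb, zero_mul, mul_zero, add_zero]


/-! ### Part 1: basic commList and ideal lemmas -/

section CommListBasic

variable {A : Type*} [Ring A]

@[simp] theorem commList_nil (u : A) : commList u [] = u := rfl

@[simp] theorem commList_cons (u b : A) (l : List A) :
    commList u (b :: l) = commList (u * b - b * u) l := rfl

theorem commList_zero (l : List A) : commList (0 : A) l = 0 := by
  induction l with
  | nil => rfl
  | cons b l ih => simp [ih]

theorem commList_sub (u v : A) (l : List A) :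
    commList (u - v) l = commList u l - commList v l := by
  induction l generalizing u v with
  | nil => rfl
  | cons b l ih =>
      simp only [commList_cons]
      rw [← ih]
      congr 1
      noncomm_ring

theorem commList_neg (u : A) (l : List A) : commList (-u) l = - commList u l := by
  have := commList_sub (0 : A) u l
  simpa [commList_zero] using this

theorem commList_append (u : A) (l₁ l₂ : List A) :
    commList u (l₁ ++ l₂) = commList (commList u l₁) l₂ := by
  induction l₁ generalizing u with
  | nil => rfl
  | cons b l ih => simp [ih]

theorem commList_one_head (b : A) (l : List A) : commList (1 : A) (b :: l) = 0 := by
  simp [commList_zero]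

theorem commList_one_mem (u : A) (l : List A) (h : (1 : A) ∈ l) : commList u l = 0 := by
  induction l generalizing u with
  | nil => simp at h
  | cons b l ih =>
      rcases List.mem_cons.mp h with h1 | h1
      · subst h1
        rcases l with _ | ⟨c, l⟩
        · simp
        · simp [commList_zero]
      · exact ih _ h1

theorem map_commList {R : Type*} [Ring R] [Algebra ℤ R] (φ : FA →ₐ[ℤ] R) (u : FA) (l : List FA) :
    φ (commList u l) = commList (φ u) (l.map φ) := by
  induction l generalizing u with
  | nil => rfl
  | cons b l ih => simp [ih]

end CommListBasic

/-! ### mono and lw -/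

noncomputable def mono (l : List ℕ) : FA := (l.map X).prod

noncomputable def lw : List ℕ → FA
  | [] => 0
  | a :: l => commList (X a) (l.map X)

@[simp] theorem mono_nil : mono [] = 1 := rfl

theorem mono_cons (x : ℕ) (l : List ℕ) : mono (x :: l) = X x * mono l := by
  simp [mono]

theorem mono_append (l₁ l₂ : List ℕ) : mono (l₁ ++ l₂) = mono l₁ * mono l₂ := by
  simp [mono]

theorem lw_cons (a : ℕ) (l : List ℕ) : lw (a :: l) = commList (X a) (l.map X) := rfl

theorem lw_head2 (a b : ℕ) (t : List ℕ) :
    lw (a :: b :: t) = commList (X a * X b - X b * X a) (t.map X) := rfl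

theorem lw_snoc (a : ℕ) (l : List ℕ) (y : ℕ) :
    lw ((a :: l) ++ [y]) = lw (a :: l) * X y - X y * lw (a :: l) := by
  show lw (a :: (l ++ [y])) = _
  rw [lw_cons, lw_cons, List.map_append, commList_append]
  rfl

/-! ### The ideals -/

def Sgen : Set FA := {w | ∃ a b c d : FA, w = (a * b - b * a) * (c * d - d * c)}

noncomputable def Ii : AddSubgroup FA := tsIdeal Sgen

noncomputable def Jg : AddSubgroup FA := tsIdeal {w | ∃ a b : FA, w = a * b - b * a}

theorem mem_tsIdeal (S : Set FA) {s : FA} (hs : s ∈ S) (a b : FA) :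
    a * s * b ∈ tsIdeal S :=
  AddSubgroup.subset_closure ⟨a, s, b, hs, rfl⟩

theorem tsIdeal_mul_left (S : Set FA) (p : FA) {f : FA} (hf : f ∈ tsIdeal S) :
    p * f ∈ tsIdeal S := by
  induction hf using AddSubgroup.closure_induction with
  | mem x hx =>
      obtain ⟨a, s, b, hs, rfl⟩ := hx
      have : p * (a * s * b) = (p * a) * s * b := by noncomm_ring
      rw [this]; exact mem_tsIdeal S hs _ _
  | zero => simpa using (tsIdeal S).zero_mem
  | add x y hx hy ihx ihy => simpa [mul_add] using add_mem ihx ihy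
  | neg x hx ihx => simpa [mul_neg] using neg_mem ihx

theorem tsIdeal_mul_right (S : Set FA) (q : FA) {f : FA} (hf : f ∈ tsIdeal S) :
    f * q ∈ tsIdeal S := by
  induction hf using AddSubgroup.closure_induction with
  | mem x hx =>
      obtain ⟨a, s, b, hs, rfl⟩ := hx
      have : (a * s * b) * q = a * s * (b * q) := by noncomm_ring
      rw [this]; exact mem_tsIdeal S hs _ _
  | zero => simpa using (tsIdeal S).zero_mem
  | add x y hx hy ihx ihy => simpa [add_mul] using add_mem ihx ihy
  | neg x hx ihx => simpa [neg_mul] using neg_mem ihx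

theorem comm_mem_J (a b : FA) : a * b - b * a ∈ Jg := by
  have := mem_tsIdeal (S := {w | ∃ a b : FA, w = a * b - b * a}) ⟨a, b, rfl⟩ 1 1
  simpa [Jg] using this

theorem J_comm {u : FA} (hu : u ∈ Jg) (x : FA) : u * x - x * u ∈ Jg :=
  sub_mem (tsIdeal_mul_right _ x hu) (tsIdeal_mul_left _ x hu)

theorem commList_mem_J {u : FA} (hu : u ∈ Jg) (l : List FA) : commList u l ∈ Jg := by
  induction l generalizing u with
  | nil => exact hu
  | cons b l ih => exact ih (J_comm hu b)

theorem commList_mem_I {u : FA} (hu : u ∈ Ii) (l : List FA) : commList u l ∈ Ii := by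
  induction l generalizing u with
  | nil => exact hu
  | cons b l ih =>
      exact ih (sub_mem (tsIdeal_mul_right _ b hu) (tsIdeal_mul_left _ b hu))

theorem gen_mem_I (a b c d : FA) : (a * b - b * a) * (c * d - d * c) ∈ Ii := by
  have := mem_tsIdeal (S := Sgen) ⟨a, b, c, d, rfl⟩ 1 1
  simpa [Ii] using this

theorem comm_mid_comm_mem_I (a b r c d : FA) :
    (a * b - b * a) * r * (c * d - d * c) ∈ Ii := by
  have key : (a * b - b * a) * r * (c * d - d * c) =
      r * ((a * b - b * a) * (c * d - d * c)) * 1 +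
      ((a * b - b * a) * r - r * (a * b - b * a)) * (c * d - d * c) := by
    noncomm_ring
  rw [key]
  refine add_mem (mem_tsIdeal Sgen ⟨a, b, c, d, rfl⟩ r 1) ?_
  exact gen_mem_I (a * b - b * a) r c d

theorem J_mul_comm_mem_I {u : FA} (hu : u ∈ Jg) (c d q : FA) :
    u * ((c * d - d * c) * q) ∈ Ii := by
  induction hu using AddSubgroup.closure_induction with
  | mem x hx =>
      obtain ⟨a, s, b, ⟨a', b', rfl⟩, rfl⟩ := hx
      have : (a * (a' * b' - b' * a') * b) * ((c * d - d * c) * q) =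
          a * ((a' * b' - b' * a') * b * (c * d - d * c)) * q := by noncomm_ring
      rw [this]
      exact tsIdeal_mul_right _ q (tsIdeal_mul_left _ a (comm_mid_comm_mem_I a' b' b c d))
  | zero => simpa using Ii.zero_mem
  | add x y hx hy ihx ihy => simpa [add_mul] using add_mem ihx ihy
  | neg x hx ihx => simpa [neg_mul] using neg_mem ihx

theorem JJ_mem_I {u w : FA} (hu : u ∈ Jg) (hw : w ∈ Jg) : u * w ∈ Ii := by
  induction hw using AddSubgroup.closure_induction with
  | mem x hx =>
      obtain ⟨a, s, b, ⟨a', b', rfl⟩, rfl⟩ := hx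
      have : u * (a * (a' * b' - b' * a') * b) =
          (u * a) * ((a' * b' - b' * a') * b) := by noncomm_ring
      rw [this]
      exact J_mul_comm_mem_I (tsIdeal_mul_right _ a hu) a' b' b
  | zero => simpa using Ii.zero_mem
  | add x y hx hy ihx ihy => simpa [mul_add] using add_mem ihx ihy
  | neg x hx ihx => simpa [mul_neg] using neg_mem ihx

theorem lw_mem_J (a b : ℕ) (t : List ℕ) : lw (a :: b :: t) ∈ Jg := by
  rw [lw_head2]
  exact commList_mem_J (comm_mem_J _ _) _

/-! ### Part 2: rewriting modulo the ideal -/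

theorem N1 {l l' : List ℕ} (h : l.Perm l') :
    ∀ u ∈ Jg, commList u (l.map X) - commList u (l'.map X) ∈ Ii := by
  induction h with
  | nil => intro u _; simpa using Ii.zero_mem
  | cons x h ih =>
      intro u hu
      simpa using ih (u * X x - X x * u) (J_comm hu (X x))
  | swap x y l =>
      intro u hu
      simp only [List.map_cons, commList_cons]
      rw [← commList_sub]
      apply commList_mem_I
      have key : (u * X y - X y * u) * X x - X x * (u * X y - X y * u) -
      ((u * X x - X x * u) * X y - X y * (u * X x - X x * u)) =
        u * (X y * X x - X x * X y) - (X y * X x - X x * X y) * u := by noncomm_ring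
      rw [key]
      exact sub_mem (JJ_mem_I hu (comm_mem_J _ _)) (JJ_mem_I (comm_mem_J _ _) hu)
  | trans h₁ h₂ ih₁ ih₂ =>
      intro u hu
      have := add_mem (ih₁ u hu) (ih₂ u hu)
      simpa using this

theorem SORT {l l' : List ℕ} (h : l.Perm l') :
    ∀ w ∈ Jg, mono l * w - mono l' * w ∈ Ii := by
  induction h with
  | nil => intro w _; simpa using Ii.zero_mem
  | cons x h ih =>
      rename_i l₁ l₂
      intro w hw
      have h2 : mono (x :: l₁) * w - mono (x :: l₂) * w
          = X x * (mono l₁ * w - mono l₂ * w) := by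
        rw [mono_cons, mono_cons]; noncomm_ring
      rw [h2]
      exact tsIdeal_mul_left _ _ (ih w hw)
  | swap x y l =>
      intro w hw
      have h2 : mono (y :: x :: l) * w - mono (x :: y :: l) * w =
          (X y * X x - X x * X y) * (mono l * w) := by
        rw [mono_cons, mono_cons, mono_cons, mono_cons]; noncomm_ring
      rw [h2]
      exact JJ_mem_I (comm_mem_J _ _) (tsIdeal_mul_left _ _ hw)
  | trans h₁ h₂ ih₁ ih₂ =>
      intro w hw
      have := add_mem (ih₁ w hw) (ih₂ w hw)
      simpa using this

/-- correction subgroup for straightening a monomial -/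
noncomputable def Kgrp (L : List ℕ) : AddSubgroup FA :=
  AddSubgroup.closure {w | ∃ p x y s, (p ++ x :: y :: s).Perm L ∧
    w = mono p * (X x * X y - X y * X x) * mono s}

theorem K_congr {L L' : List ℕ} (h : L.Perm L') : Kgrp L = Kgrp L' := by
  unfold Kgrp
  congr 1
  ext w
  constructor
  · rintro ⟨p, x, y, s, hp, rfl⟩; exact ⟨p, x, y, s, hp.trans h, rfl⟩
  · rintro ⟨p, x, y, s, hp, rfl⟩; exact ⟨p, x, y, s, hp.trans h.symm, rfl⟩

theorem Kgrp_mul_left {L : List ℕ} (x : ℕ) {w : FA} (hw : w ∈ Kgrp L) :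
    X x * w ∈ Kgrp (x :: L) := by
  induction hw using AddSubgroup.closure_induction with
  | mem g hg =>
      obtain ⟨p, a, b, s, hp, rfl⟩ := hg
      have : X x * (mono p * (X a * X b - X b * X a) * mono s) =
          mono (x :: p) * (X a * X b - X b * X a) * mono s := by
        rw [mono_cons]; noncomm_ring
      rw [this]
      exact AddSubgroup.subset_closure ⟨x :: p, a, b, s, (hp.cons x), rfl⟩
  | zero => simpa using (Kgrp (x :: L)).zero_mem
  | add a b ha hb iha ihb => simpa [mul_add] using add_mem iha ihb
  | neg a ha iha => simpa [mul_neg] using neg_mem iha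

theorem PERMDIFF {L L' : List ℕ} (h : L.Perm L') : mono L - mono L' ∈ Kgrp L := by
  induction h with
  | nil => simpa using (Kgrp ([] : List ℕ)).zero_mem
  | cons x h ih =>
      rename_i l₁ l₂
      have h2 : mono (x :: l₁) - mono (x :: l₂) = X x * (mono l₁ - mono l₂) := by
        rw [mono_cons, mono_cons, mul_sub]
      rw [h2]
      exact Kgrp_mul_left x ih
  | swap x y l =>
      have h2 : mono (y :: x :: l) - mono (x :: y :: l) =
          mono [] * (X y * X x - X x * X y) * mono l := by
        rw [mono_cons, mono_cons, mono_cons, mono_cons, mono_nil]; noncomm_ring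
      rw [h2]
      exact AddSubgroup.subset_closure ⟨[], y, x, l, List.Perm.refl _, rfl⟩
  | trans h₁ h₂ ih₁ ih₂ =>
      rename_i l₁ l₂ l₃
      have h3 : mono l₁ - mono l₃ = (mono l₁ - mono l₂) + (mono l₂ - mono l₃) := by abel
      rw [h3]
      exact add_mem ih₁ (by rw [K_congr h₁]; exact ih₂)

/-! ### LC normal form -/

/-- the set of normalized long commutators on (a permutation class of) `c` -/
def NFset (c : List ℕ) : Set FA :=
  {w | ∃ j k t', (j :: k :: t').Perm c ∧ k < j ∧ (∀ i ∈ t', k < i) ∧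
      t'.Pairwise (· < ·) ∧ w = lw (j :: k :: t')}

noncomputable def NFgrp (c : List ℕ) : AddSubgroup FA :=
  Ii ⊔ AddSubgroup.closure (NFset c)

theorem lw_perm_tail (a b : ℕ) {t t' : List ℕ} (h : t.Perm t') :
    lw (a :: b :: t) - lw (a :: b :: t') ∈ Ii := by
  rw [lw_head2, lw_head2]
  exact N1 h _ (comm_mem_J _ _)

theorem lw_antisym (a b : ℕ) (t : List ℕ) : lw (a :: b :: t) = - lw (b :: a :: t) := by
  rw [lw_head2, lw_head2, ← commList_neg]
  congr 1
  noncomm_ring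

theorem lw3 (a b x : ℕ) (r : List ℕ) :
    lw (a :: b :: x :: r) = lw (a :: x :: b :: r) - lw (b :: x :: a :: r) := by
  rw [lw_head2, lw_head2, lw_head2]
  simp only [List.map_cons, commList_cons]
  rw [← commList_sub]
  congr 1
  noncomm_ring

theorem sorted_lt_of_nodup {t : List ℕ} (hnd : t.Nodup) :
    (t.mergeSort (· ≤ ·)).Pairwise (· < ·) := by
  have hs : (t.mergeSort (· ≤ ·)).Pairwise (· ≤ ·) := List.pairwise_mergeSort' _ _
  exact (hs.and ((List.mergeSort_perm t _).nodup_iff.mpr hnd)).imp (fun h => lt_of_le_of_ne h.1 h.2)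

theorem lcnorm (a b : ℕ) (t : List ℕ) (hnd : (a :: b :: t).Nodup) :
    lw (a :: b :: t) ∈ NFgrp (a :: b :: t) := by
  have hI : Ii ≤ NFgrp (a :: b :: t) := le_sup_left
  have hC : AddSubgroup.closure (NFset (a :: b :: t)) ≤ NFgrp (a :: b :: t) := le_sup_right
  have hab : a ≠ b := by intro h; subst h; simp at hnd
  have hat : a ∉ t := by intro h; simp [h] at hnd
  have hbt : b ∉ t := by intro h; simp [h] at hnd
  have htnd : t.Nodup := (List.nodup_cons.mp (List.nodup_cons.mp hnd).2).2
  obtain ⟨ts, hperm, hsorted⟩ : ∃ ts, t.Perm ts ∧ ts.Pairwise (· < ·) :=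
    ⟨t.mergeSort (· ≤ ·), (List.mergeSort_perm t _).symm, sorted_lt_of_nodup htnd⟩
  have h1 : lw (a :: b :: t) - lw (a :: b :: ts) ∈ Ii := lw_perm_tail a b hperm
  have hsplit : lw (a :: b :: t) = (lw (a :: b :: t) - lw (a :: b :: ts)) + lw (a :: b :: ts) := by
    abel
  rw [hsplit]
  refine add_mem (hI h1) ?_
  rcases ts with _ | ⟨u, rest⟩
  · have ht0 : t = [] := hperm.eq_nil
    subst ht0
    rcases Nat.lt_or_ge a b with hlt | hge
    · rw [lw_antisym]
      refine neg_mem (hC (AddSubgroup.subset_closure ?_))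
      exact ⟨b, a, [], List.Perm.swap a b [], hlt, by simp, List.Pairwise.nil, rfl⟩
    · have hlt : b < a := lt_of_le_of_ne hge (Ne.symm hab)
      exact hC (AddSubgroup.subset_closure
        ⟨a, b, [], List.Perm.refl _, hlt, by simp, List.Pairwise.nil, rfl⟩)
  · have hsc := List.pairwise_cons.mp hsorted
    have hurest : ∀ i ∈ rest, u < i := hsc.1
    have hrests : rest.Pairwise (· < ·) := hsc.2
    have htsnd : (u :: rest).Nodup := hperm.nodup_iff.mp htnd
    have hrestnd : rest.Nodup := (List.nodup_cons.mp htsnd).2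
    have hurestmem : u ∉ rest := (List.nodup_cons.mp htsnd).1
    have hmemt : ∀ i, i ∈ u :: rest → i ∈ t := fun i hi => hperm.mem_iff.mpr hi
    have huts : u ∈ t := hmemt u (by simp)
    have hau : a ≠ u := fun h => hat (h ▸ huts)
    have hbu : b ≠ u := fun h => hbt (h ▸ huts)
    have harest : a ∉ rest := fun h => hat (hmemt a (by simp [h]))
    have hbrest : b ∉ rest := fun h => hbt (hmemt b (by simp [h]))
    have hbase : (a :: b :: u :: rest).Perm (a :: b :: t) :=
      ((hperm.symm).cons b).cons a
    have hmin : (b < a ∧ b < u) ∨ (a < b ∧ a < u) ∨ (u < a ∧ u < b) := by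
      rcases Nat.lt_trichotomy a b with h | h | h <;>
        rcases Nat.lt_trichotomy a u with h' | h' | h' <;>
        rcases Nat.lt_trichotomy b u with h'' | h'' | h'' <;>
        first
          | (exact absurd h hab)
          | (exact absurd h' hau)
          | (exact absurd h'' hbu)
          | omega
    rcases hmin with ⟨h1', h2'⟩ | ⟨h1', h2'⟩ | ⟨h1', h2'⟩
    · -- b is the minimum : already normalized
      refine hC (AddSubgroup.subset_closure ⟨a, b, u :: rest, hbase, h1', ?_, hsorted, rfl⟩)
      intro i hi
      rcases List.mem_cons.mp hi with rfl | hi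
      · exact h2'
      · exact lt_trans h2' (hurest i hi)
    · -- a is the minimum : antisymmetry
      rw [lw_antisym]
      refine neg_mem (hC (AddSubgroup.subset_closure
        ⟨b, a, u :: rest, (List.Perm.swap a b _).trans hbase, h1', ?_, hsorted, rfl⟩))
      intro i hi
      rcases List.mem_cons.mp hi with rfl | hi
      · exact h2'
      · exact lt_trans h2' (hurest i hi)
    · -- u is the minimum : Jacobi
      obtain ⟨s1, hp1, hs1⟩ : ∃ s1, (b :: rest).Perm s1 ∧ s1.Pairwise (· < ·) :=
        ⟨(b :: rest).mergeSort (· ≤ ·), (List.mergeSort_perm _ _).symm,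
          sorted_lt_of_nodup (List.nodup_cons.mpr ⟨hbrest, hrestnd⟩)⟩
      obtain ⟨s2, hp2, hs2⟩ : ∃ s2, (a :: rest).Perm s2 ∧ s2.Pairwise (· < ·) :=
        ⟨(a :: rest).mergeSort (· ≤ ·), (List.mergeSort_perm _ _).symm,
          sorted_lt_of_nodup (List.nodup_cons.mpr ⟨harest, hrestnd⟩)⟩
      have d1 : lw (a :: u :: b :: rest) - lw (a :: u :: s1) ∈ Ii := lw_perm_tail a u hp1
      have d2 : lw (b :: u :: a :: rest) - lw (b :: u :: s2) ∈ Ii := lw_perm_tail b u hp2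
      have hult1 : ∀ i ∈ s1, u < i := by
        intro i hi
        rcases List.mem_cons.mp (hp1.mem_iff.mpr hi) with rfl | hi'
        · exact h2'
        · exact hurest i hi'
      have hult2 : ∀ i ∈ s2, u < i := by
        intro i hi
        rcases List.mem_cons.mp (hp2.mem_iff.mpr hi) with rfl | hi'
        · exact h1'
        · exact hurest i hi'
      have hper1 : (a :: u :: s1).Perm (a :: b :: t) := by
        refine List.Perm.trans ?_ hbase
        exact List.Perm.cons a (((hp1.symm).cons u).trans (List.Perm.swap b u rest))
      have hper2 : (b :: u :: s2).Perm (a :: b :: t) := by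
        refine List.Perm.trans ?_ ((List.Perm.swap a b _).trans hbase)
        exact List.Perm.cons b (((hp2.symm).cons u).trans (List.Perm.swap a u rest))
      have m1 : lw (a :: u :: s1) ∈ AddSubgroup.closure (NFset (a :: b :: t)) :=
        AddSubgroup.subset_closure ⟨a, u, s1, hper1, h1', hult1, hs1, rfl⟩
      have m2 : lw (b :: u :: s2) ∈ AddSubgroup.closure (NFset (a :: b :: t)) :=
        AddSubgroup.subset_closure ⟨b, u, s2, hper2, h2', hult2, hs2, rfl⟩
      have e3 : lw (a :: b :: u :: rest) =
          ((lw (a :: u :: b :: rest) - lw (a :: u :: s1)) + lw (a :: u :: s1)) -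
          ((lw (b :: u :: a :: rest) - lw (b :: u :: s2)) + lw (b :: u :: s2)) := by
        rw [lw3 a b u rest]; abel
      rw [e3]
      exact sub_mem (add_mem (hI d1) (hC m1)) (add_mem (hI d2) (hC m2))

/-! ### Part 3: spanning -/

def Bset (n : ℕ) : Set FA :=
  {w | w = mono (List.range n)} ∪
  {w | ∃ p j k t, (p ++ j :: k :: t).Perm (List.range n) ∧ p.Pairwise (· < ·) ∧
      t.Pairwise (· < ·) ∧ k < j ∧ (∀ i ∈ t, k < i) ∧ w = mono p * lw (j :: k :: t)}

noncomputable def Gg (n : ℕ) : AddSubgroup FA := Ii ⊔ AddSubgroup.closure (Bset n)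

theorem Ii_le_G (n : ℕ) : Ii ≤ Gg n := le_sup_left

theorem Bcl_le_G (n : ℕ) : AddSubgroup.closure (Bset n) ≤ Gg n := le_sup_right

/-- Claim 3 : a sorted-prefix times long commutator is in `Gg n`. -/
theorem claim3 {n : ℕ} {p : List ℕ} {a b : ℕ} {t : List ℕ}
    (hperm : (p ++ a :: b :: t).Perm (List.range n)) :
    mono p * lw (a :: b :: t) ∈ Gg n := by
  have hnd : (p ++ a :: b :: t).Nodup := hperm.nodup_iff.mpr List.nodup_range
  have hcnd : (a :: b :: t).Nodup := hnd.of_append_right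
  have hpnd : p.Nodup := hnd.of_append_left
  obtain ⟨ps, hps, hpss⟩ : ∃ ps, p.Perm ps ∧ ps.Pairwise (· < ·) :=
    ⟨p.mergeSort (· ≤ ·), (List.mergeSort_perm _ _).symm, sorted_lt_of_nodup hpnd⟩
  have hdiff : mono p * lw (a :: b :: t) - mono ps * lw (a :: b :: t) ∈ Ii :=
    SORT hps _ (lw_mem_J a b t)
  have hsplit : mono p * lw (a :: b :: t) =
      (mono p * lw (a :: b :: t) - mono ps * lw (a :: b :: t)) +
      mono ps * lw (a :: b :: t) := by abel
  rw [hsplit]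
  refine add_mem (Ii_le_G n hdiff) ?_
  -- normalize the commutator
  have hnf : lw (a :: b :: t) ∈ NFgrp (a :: b :: t) := lcnorm a b t hcnd
  rw [NFgrp] at hnf
  rw [AddSubgroup.mem_sup] at hnf
  obtain ⟨i, hi, q, hq, hiq⟩ := hnf
  rw [← hiq, mul_add]
  refine add_mem (Ii_le_G n (tsIdeal_mul_left _ _ hi)) ?_
  clear hiq hsplit hdiff
  induction hq using AddSubgroup.closure_induction with
  | mem w hw =>
      obtain ⟨j, k, t', hpc, hkj, hkt, hts, rfl⟩ := hw
      refine Bcl_le_G n (AddSubgroup.subset_closure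
        (Or.inr ⟨ps, j, k, t', ?_, hpss, hts, hkj, hkt, rfl⟩))
      exact (List.Perm.append hps.symm hpc).trans hperm
  | zero => simpa using (Gg n).zero_mem
  | add x y hx hy ihx ihy => simpa [mul_add] using add_mem ihx ihy
  | neg x hx ihx => simpa [mul_neg] using neg_mem ihx

/-- Claim 2 : prefix * commutator * suffix is in `Gg n`. -/
theorem claim2 {n : ℕ} : ∀ (s p : List ℕ) (a b : ℕ) (t : List ℕ),
    ((p ++ (a :: b :: t)) ++ s).Perm (List.range n) →
    mono p * lw (a :: b :: t) * mono s ∈ Gg n := by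
  intro s
  induction s with
  | nil =>
      intro p a b t h
      rw [mono_nil, mul_one]
      exact claim3 (by simpa using h)
  | cons y s ih =>
      intro p a b t h
      have key : mono p * lw (a :: b :: t) * mono (y :: s) =
          mono (p ++ [y]) * lw (a :: b :: t) * mono s +
          mono p * lw ((a :: b :: t) ++ [y]) * mono s := by
        rw [mono_cons, mono_append, lw_snoc]
        have h1 : mono [y] = X y := by simp [mono]
        rw [h1]
        noncomm_ring
      rw [key]
      have hp1 : List.Perm (((p ++ [y]) ++ (a :: b :: t)) ++ s) ((p ++ a :: b :: t) ++ (y :: s)) := by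
        rw [List.perm_iff_count]
        intro x
        simp only [List.count_append, List.count_cons, List.count_nil]
        omega
      have hp2 : List.Perm ((p ++ ((a :: b :: t) ++ [y])) ++ s) ((p ++ a :: b :: t) ++ (y :: s)) := by
        rw [List.perm_iff_count]
        intro x
        simp only [List.count_append, List.count_cons, List.count_nil]
        omega
      refine add_mem (ih (p ++ [y]) a b t (hp1.trans h)) ?_
      have := ih p a b (t ++ [y]) (by simpa using hp2.trans h)
      simpa using this

theorem Kgrp_le_G {n : ℕ} {L : List ℕ} (hL : L.Perm (List.range n)) : Kgrp L ≤ Gg n := by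
  rw [Kgrp]
  refine AddSubgroup.closure_le _ |>.mpr ?_
  rintro w ⟨p, x, y, s, hp, rfl⟩
  have : mono p * (X x * X y - X y * X x) * mono s = mono p * lw (x :: y :: []) * mono s := by
    rw [lw_head2]; rfl
  rw [this]
  exact claim2 s p x y [] (by simpa using hp.trans hL)

theorem mono_mem_G {n : ℕ} {L : List ℕ} (hL : L.Perm (List.range n)) : mono L ∈ Gg n := by
  have h1 : mono L - mono (List.range n) ∈ Kgrp L := PERMDIFF hL
  have h2 : mono L = (mono L - mono (List.range n)) + mono (List.range n) := by abel
  rw [h2]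
  exact add_mem (Kgrp_le_G hL h1)
    (Bcl_le_G n (AddSubgroup.subset_closure (Or.inl rfl)))

theorem Pn_le_G (n : ℕ) : Pn n ≤ Gg n := by
  rw [Pn]
  refine AddSubgroup.closure_le _ |>.mpr ?_
  rintro w ⟨σ, rfl⟩
  have hmap : (List.ofFn fun i => X (σ i)) = (List.ofFn fun i => ((σ i : ℕ))).map X := by
    rw [List.map_ofFn]; rfl
  have : (List.ofFn fun i => X (σ i)).prod = mono (List.ofFn fun i => ((σ i : ℕ))) := by
    rw [mono, hmap]
  rw [this]
  apply mono_mem_G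
  have h1 : (List.ofFn fun i => ((σ i : ℕ))) = ((List.finRange n).map σ).map Fin.val := by
    rw [List.ofFn_eq_map, List.map_map]; rfl
  rw [h1]
  have h2 : ((List.finRange n).map σ).Perm (List.finRange n) := by
    refine (List.perm_ext_iff_of_nodup ?_ (List.nodup_finRange n)).mpr ?_
    · exact (List.nodup_finRange n).map σ.injective
    · intro x
      simp only [List.mem_map, List.mem_finRange, true_and, iff_true]
      exact ⟨σ.symm x, σ.apply_symm_apply x⟩
  have h3 := h2.map Fin.val
  rwa [List.map_coe_finRange_eq_range] at h3

/-! ### Part 4: evaluation in UT2 -/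

theorem mem_UT2 {S : Type*} [CommRing S] {M : Matrix (Fin 2) (Fin 2) S} :
    M ∈ UT2 S ↔ M 1 0 = 0 := Iff.rfl

theorem ut2_ccz {S : Type*} [CommRing S] (x y z w : UT2 S) :
    (x * y - y * x) * (z * w - w * z) = 0 := by
  apply Subtype.ext
  push_cast
  have hx : (x : Matrix (Fin 2) (Fin 2) S) 1 0 = 0 := x.2
  have hy : (y : Matrix (Fin 2) (Fin 2) S) 1 0 = 0 := y.2
  have hz : (z : Matrix (Fin 2) (Fin 2) S) 1 0 = 0 := z.2
  have hw : (w : Matrix (Fin 2) (Fin 2) S) 1 0 = 0 := w.2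
  ext i j
  fin_cases i <;> fin_cases j <;>
    simp [Matrix.mul_apply, Matrix.sub_apply, Fin.sum_univ_two, hx, hy, hz, hw] <;>
    ring

theorem Ii_le_IdA : Ii ≤ IdA (UT2 ℚ) := by
  rw [Ii, tsIdeal]
  refine AddSubgroup.closure_le _ |>.mpr ?_
  rintro w ⟨a, s, b, ⟨a', b', c', d', rfl⟩, rfl⟩
  intro v
  simp only [map_mul, map_sub]
  rw [ut2_ccz]
  simp

/-! evaluation lemmas -/

theorem eval_X {R : Type*} [Ring R] [Algebra ℤ R] (v : ℕ → R) (i : ℕ) :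
    FreeAlgebra.lift ℤ v (X i) = v i := by
  simp [X]

theorem eval_mono {R : Type*} [Ring R] [Algebra ℤ R] (v : ℕ → R) (l : List ℕ) :
    FreeAlgebra.lift ℤ v (mono l) = (l.map v).prod := by
  rw [mono, map_list_prod, List.map_map]
  congr 1
  ext i
  simp [X]

theorem eval_lw {R : Type*} [Ring R] [Algebra ℤ R] (v : ℕ → R) (a : ℕ) (l : List ℕ) :
    FreeAlgebra.lift ℤ v (lw (a :: l)) = commList (v a) (l.map v) := by
  rw [lw_cons, map_commList (FreeAlgebra.lift ℤ v) (X a) (l.map X), List.map_map, eval_X]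
  congr 1
  ext i
  simp [X]

/-! the special matrices -/

noncomputable def E12 : UT2 ℚ := ⟨!![0, 1; 0, 0], by simp [mem_UT2]⟩
noncomputable def E22 : UT2 ℚ := ⟨!![0, 0; 0, 1], by simp [mem_UT2]⟩

theorem E22_mul_E22 : E22 * E22 = E22 := by
  apply Subtype.ext
  show (!![(0:ℚ), 0; 0, 1] : Matrix _ _ ℚ) * !![0, 0; 0, 1] = !![0, 0; 0, 1]
  ext i j
  fin_cases i <;> fin_cases j <;> norm_num [Matrix.mul_apply, Fin.sum_univ_two]

theorem E12_mul_E22 : E12 * E22 = E12 := by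
  apply Subtype.ext
  show (!![(0:ℚ), 1; 0, 0] : Matrix _ _ ℚ) * !![0, 0; 0, 1] = !![0, 1; 0, 0]
  ext i j
  fin_cases i <;> fin_cases j <;> norm_num [Matrix.mul_apply, Fin.sum_univ_two]

theorem E22_mul_E12 : E22 * E12 = 0 := by
  apply Subtype.ext
  show (!![(0:ℚ), 0; 0, 1] : Matrix _ _ ℚ) * !![0, 1; 0, 0] = 0
  ext i j
  fin_cases i <;> fin_cases j <;> norm_num [Matrix.mul_apply, Fin.sum_univ_two]

theorem E12_mul_E12 : E12 * E12 = 0 := by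
  apply Subtype.ext
  show (!![(0:ℚ), 1; 0, 0] : Matrix _ _ ℚ) * !![0, 1; 0, 0] = 0
  ext i j
  fin_cases i <;> fin_cases j <;> norm_num [Matrix.mul_apply, Fin.sum_univ_two]

theorem zsmul_E12_eq_zero {z : ℤ} (h : z • E12 = 0) : z = 0 := by
  have h3 := congrArg (fun m : UT2 ℚ => (m : Matrix (Fin 2) (Fin 2) ℚ) 0 1) h
  have h2 : ((z • E12 : UT2 ℚ) : Matrix (Fin 2) (Fin 2) ℚ) 0 1 = (z : ℚ) := by
    push_cast
    simp [E12]
  rw [h2] at h3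
  simp only [ZeroMemClass.coe_zero, Matrix.zero_apply] at h3
  exact_mod_cast h3

theorem zsmul_one_eq_zero {z : ℤ} (h : z • (1 : UT2 ℚ) = 0) : z = 0 := by
  have h3 := congrArg (fun m : UT2 ℚ => (m : Matrix (Fin 2) (Fin 2) ℚ) 0 0) h
  have h2 : ((z • (1 : UT2 ℚ) : UT2 ℚ) : Matrix (Fin 2) (Fin 2) ℚ) 0 0 = (z : ℚ) := by
    push_cast
    simp
  rw [h2] at h3
  simp only [ZeroMemClass.coe_zero, Matrix.zero_apply] at h3
  exact_mod_cast h3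

/-! commList computations with the special matrices -/

theorem commList_E12_of_all_E22 (l : List (UT2 ℚ)) (h : ∀ x ∈ l, x = E22) :
    commList E12 l = E12 := by
  induction l with
  | nil => rfl
  | cons b l ih =>
      have hb : b = E22 := h b (by simp)
      subst hb
      rw [commList_cons, E12_mul_E22, E22_mul_E12, sub_zero]
      exact ih (fun x hx => h x (by simp [hx]))

theorem commList_zsmul_E12 (l : List (UT2 ℚ)) (h : ∀ x ∈ l, x = E22 ∨ x = E12) :
    ∀ z : ℤ, ∃ z' : ℤ, commList (z • E12) l = z' • E12 := by
  induction l with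
  | nil => exact fun z => ⟨z, rfl⟩
  | cons b l ih =>
      intro z
      rcases h b (by simp) with hb | hb <;> subst hb
      · have he : (z • E12) * E22 - E22 * (z • E12) = z • E12 := by
          rw [smul_mul_assoc, mul_smul_comm, E12_mul_E22, E22_mul_E12, smul_zero, sub_zero]
        rw [commList_cons, he]
        exact ih (fun x hx => h x (by simp [hx])) z
      · have he : (z • E12) * E12 - E12 * (z • E12) = (0 : ℤ) • E12 := by
          rw [smul_mul_assoc, mul_smul_comm, E12_mul_E12, smul_zero, sub_zero, zero_smul]
        rw [commList_cons, he]
        exact ih (fun x hx => h x (by simp [hx])) 0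

theorem pair_zsmul_E12 {a b : UT2 ℚ} (ha : a = E22 ∨ a = E12) (hb : b = E22 ∨ b = E12) :
    ∃ z : ℤ, a * b - b * a = z • E12 := by
  rcases ha with rfl | rfl <;> rcases hb with rfl | rfl
  · exact ⟨0, by rw [sub_self, zero_smul]⟩
  · exact ⟨-1, by rw [E22_mul_E12, E12_mul_E22, zero_sub, neg_smul, one_smul]⟩
  · exact ⟨1, by rw [E12_mul_E22, E22_mul_E12, sub_zero, one_smul]⟩
  · exact ⟨0, by rw [sub_self, zero_smul]⟩

theorem prod_ones_E22_smul_E12 (l : List (UT2 ℚ)) (h : ∀ x ∈ l, x = 1 ∨ x = E22) :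
    ∀ z : ℤ, l.prod * (z • E12) = z • E12 ∨ l.prod * (z • E12) = 0 := by
  induction l with
  | nil => intro z; left; rw [List.prod_nil, one_mul]
  | cons b l ih =>
      intro z
      rw [List.prod_cons, mul_assoc]
      rcases h b (by simp) with hb | hb <;> subst hb
      · rcases ih (fun x hx => h x (by simp [hx])) z with h' | h' <;> rw [h'] <;> simp
      · rcases ih (fun x hx => h x (by simp [hx])) z with h' | h' <;> rw [h']
        · right; rw [mul_smul_comm, E22_mul_E12, smul_zero]
        · right; rw [mul_zero]

theorem prod_with_E22_smul_E12 (l : List (UT2 ℚ)) (h : ∀ x ∈ l, x = 1 ∨ x = E22)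
    (hE : E22 ∈ l) : ∀ z : ℤ, l.prod * (z • E12) = 0 := by
  intro z
  induction l with
  | nil => simp at hE
  | cons b l ih =>
      rw [List.prod_cons, mul_assoc]
      rcases h b (by simp) with hb | hb <;> subst hb
      · rw [one_mul]
        have hE' : E22 ∈ l := by
          rcases List.mem_cons.mp hE with h' | h'
          · exfalso
            have : ((1 : UT2 ℚ) : Matrix (Fin 2) (Fin 2) ℚ) 0 0 = 1 := by simp
            rw [← h'] at this
            simp [E22] at this
          · exact h'
        exact ih (fun x hx => h x (by simp [hx])) hE'
      · rcases prod_ones_E22_smul_E12 l (fun x hx => h x (by simp [hx])) z with h' | h' <;>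
          rw [h']
        · rw [mul_smul_comm, E22_mul_E12, smul_zero]
        · rw [mul_zero]

/-! ### Part 5: independence and the main theorem -/

noncomputable def vsub (j k : ℕ) (t : List ℕ) : ℕ → UT2 ℚ :=
  fun i => if i = j then E12 else if i = k ∨ i ∈ t then E22 else 1

theorem vsub_j (j k : ℕ) (t : List ℕ) : vsub j k t j = E12 := by simp [vsub]

theorem vsub_E22 {j k : ℕ} {t : List ℕ} {i : ℕ} (h1 : i ≠ j) (h2 : i = k ∨ i ∈ t) :
    vsub j k t i = E22 := by
  rw [vsub, if_neg h1, if_pos h2]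

theorem vsub_one {j k : ℕ} {t : List ℕ} {i : ℕ} (h1 : i ≠ j) (h2 : ¬(i = k ∨ i ∈ t)) :
    vsub j k t i = 1 := by
  rw [vsub, if_neg h1, if_neg h2]

instance : IsAntisymm ℕ (· < ·) := ⟨fun _ _ h h' => absurd h' (Nat.lt_asymm h)⟩

theorem sorted_eq_of_mem_iff {l₁ l₂ : List ℕ} (h₁ : l₁.Pairwise (· < ·))
    (h₂ : l₂.Pairwise (· < ·)) (h : ∀ x, x ∈ l₁ ↔ x ∈ l₂) : l₁ = l₂ := by
  have hnd₁ : l₁.Nodup := h₁.imp ne_of_lt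
  have hnd₂ : l₂.Nodup := h₂.imp ne_of_lt
  exact ((List.perm_ext_iff_of_nodup hnd₁ hnd₂).mpr h).eq_of_pairwise' h₁ h₂

theorem evtarget {p : List ℕ} {j k : ℕ} {t : List ℕ} (hnd : (p ++ j :: k :: t).Nodup) :
    FreeAlgebra.lift ℤ (vsub j k t) (mono p * lw (j :: k :: t)) = E12 := by
  obtain ⟨hndp, hndc, hdisj⟩ := List.nodup_append.mp hnd
  have hjkt : j ∉ k :: t := (List.nodup_cons.mp hndc).1
  rw [map_mul, eval_mono, eval_lw]
  have hpre : (p.map (vsub j k t)).prod = 1 := by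
    apply List.prod_eq_one
    intro x hx
    obtain ⟨i, hi, rfl⟩ := List.mem_map.mp hx
    have hic : i ∉ j :: k :: t := fun hc => hdisj _ hi _ hc rfl
    refine vsub_one (fun h => hic (by simp [h])) (fun h => hic ?_)
    rcases h with h | h
    · simp [h]
    · simp [h]
  rw [hpre, one_mul, vsub_j]
  apply commList_E12_of_all_E22
  intro x hx
  obtain ⟨i, hi, rfl⟩ := List.mem_map.mp hx
  have hij : i ≠ j := fun h => hjkt (h ▸ hi)
  exact vsub_E22 hij (List.mem_cons.mp hi)

theorem evother {n : ℕ} {p : List ℕ} {j k : ℕ} {t : List ℕ}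
    (hperm : (p ++ j :: k :: t).Perm (List.range n))
    (hkj : k < j) (hkt : ∀ i ∈ t, k < i)
    (hsp : p.Pairwise (· < ·)) (hst : t.Pairwise (· < ·))
    {p' : List ℕ} {j' k' : ℕ} {t' : List ℕ}
    (hperm' : (p' ++ j' :: k' :: t').Perm (List.range n))
    (hkj' : k' < j') (hkt' : ∀ i ∈ t', k' < i)
    (hsp' : p'.Pairwise (· < ·)) (hst' : t'.Pairwise (· < ·)) :
    FreeAlgebra.lift ℤ (vsub j k t) (mono p' * lw (j' :: k' :: t')) = 0 ∨
      (p' = p ∧ j' = j ∧ k' = k ∧ t' = t) := by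
  set v := vsub j k t with hv
  have hnd : (p ++ j :: k :: t).Nodup := hperm.nodup_iff.mpr List.nodup_range
  have hnd' : (p' ++ j' :: k' :: t').Nodup := hperm'.nodup_iff.mpr List.nodup_range
  obtain ⟨hndp, hndc, hdisj⟩ := List.nodup_append.mp hnd
  obtain ⟨hndp', hndc', hdisj'⟩ := List.nodup_append.mp hnd'
  have hjkt : j ∉ k :: t := (List.nodup_cons.mp hndc).1
  have hknt : k ∉ t := (List.nodup_cons.mp (List.nodup_cons.mp hndc).2).1
  have hjkt' : j' ∉ k' :: t' := (List.nodup_cons.mp hndc').1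
  have hknt' : k' ∉ t' := (List.nodup_cons.mp (List.nodup_cons.mp hndc').2).1
  have hkj_ne : k ≠ j := Nat.ne_of_lt hkj
  have hjt : j ∉ t := fun h => hjkt (List.mem_cons_of_mem k h)
  rw [map_mul, eval_mono, eval_lw]
  by_cases hA : ∀ i ∈ (j' :: k' :: t'), (i = j ∨ i = k ∨ i ∈ t)
  · -- all entries of the commutator are in Q
    have hv' : ∀ i ∈ (j' :: k' :: t'), v i = E22 ∨ v i = E12 := by
      intro i hi
      rcases hA i hi with h | h | h
      · right; rw [h]; exact vsub_j j k t
      · left; rw [h]; exact vsub_E22 hkj_ne (Or.inl rfl)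
      · left
        exact vsub_E22 (fun he => hjt (he ▸ h)) (Or.inr h)
    by_cases hjin : j = j' ∨ j = k' ∨ j ∈ t'
    · by_cases hB : ∀ i, (i = j ∨ i = k ∨ i ∈ t) → (i = j' ∨ i = k' ∨ i ∈ t')
      · -- Q = Q'
        have hk'k : k' = k := by
          by_contra hne
          have h1 : k < k' := by
            rcases hA k' (by simp) with h | h | h
            · exact h ▸ hkj
            · exact absurd h hne
            · exact hkt k' h
          have h2 : k' < k := by
            rcases hB k (Or.inr (Or.inl rfl)) with h | h | h
            · exact h ▸ hkj'
            · exact absurd h.symm hne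
            · exact hkt' k h
          omega
        by_cases hjj : j' = j
        · right
          have ht't : t' = t := by
            apply sorted_eq_of_mem_iff hst' hst
            intro x
            constructor
            · intro hx
              rcases hA x (by simp [hx]) with h | h | h
              · exfalso
                apply hjkt'
                refine List.mem_cons_of_mem k' ?_
                rw [hjj, ← h]
                exact hx
              · exfalso
                apply hknt'
                rw [hk'k, ← h]
                exact hx
              · exact h
            · intro hx
              rcases hB x (Or.inr (Or.inr hx)) with h | h | h
              · exfalso
                apply hjkt
                refine List.mem_cons_of_mem k ?_
                rw [← hjj, ← h]
                exact hx
              · exfalso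
                apply hknt
                rw [← hk'k, ← h]
                exact hx
              · exact h
          have hp'p : p' = p := by
            apply sorted_eq_of_mem_iff hsp' hsp
            intro x
            have hQQ' : ∀ y, y ∈ (j :: k :: t : List ℕ) → y ∈ (j' :: k' :: t' : List ℕ) := by
              intro y hy
              have hy' : y = j ∨ y = k ∨ y ∈ t := by
                rcases List.mem_cons.mp hy with h | h
                · exact Or.inl h
                · rcases List.mem_cons.mp h with h' | h'
                  · exact Or.inr (Or.inl h')
                  · exact Or.inr (Or.inr h')
              rcases hB y hy' with rfl | rfl | h
              · simp
              · simp
              · simp [h]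
            have hQ'Q : ∀ y, y ∈ (j' :: k' :: t' : List ℕ) → y ∈ (j :: k :: t : List ℕ) := by
              intro y hy
              rcases hA y hy with rfl | rfl | h
              · simp
              · simp
              · simp [h]
            constructor
            · intro hx
              have hxr : x ∈ List.range n := hperm'.subset (List.mem_append_left _ hx)
              have hxc' : x ∉ (j' :: k' :: t' : List ℕ) := fun hc => hdisj' _ hx _ hc rfl
              rcases List.mem_append.mp (hperm.symm.subset hxr) with h | h
              · exact h
              · exact absurd (hQQ' x h) hxc'
            · intro hx
              have hxr : x ∈ List.range n := hperm.subset (List.mem_append_left _ hx)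
              have hxc : x ∉ (j :: k :: t : List ℕ) := fun hc => hdisj _ hx _ hc rfl
              rcases List.mem_append.mp (hperm'.symm.subset hxr) with h | h
              · exact h
              · exact absurd (hQ'Q x h) hxc
          exact ⟨hp'p, hjj, hk'k, ht't⟩
        · -- j' ≠ j but Q = Q' : head pair is [E22, E22]
          left
          have hvj' : v j' = E22 := by
            rcases hA j' (by simp) with h | h | h
            · exact absurd h hjj
            · exact h ▸ vsub_E22 hkj_ne (Or.inl rfl)
            · exact vsub_E22 (fun he => hjt (he ▸ h)) (Or.inr h)
          have hvk' : v k' = E22 := hk'k ▸ vsub_E22 hkj_ne (Or.inl rfl)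
          rw [List.map_cons, commList_cons, hvj', hvk', sub_self, commList_zero, mul_zero]
      · -- Q ⊋ Q' : prefix contains an E22
        left
        push_neg at hB
        obtain ⟨i, hiQ, hiQ'⟩ := hB
        have hij : i ≠ j := by
          rintro rfl
          rcases hjin with h | h | h
          · exact hiQ'.1 h
          · exact hiQ'.2.1 h
          · exact hiQ'.2.2 h
        have hiE : v i = E22 := vsub_E22 hij (hiQ.resolve_left hij)
        have hiR : i ∈ List.range n := by
          apply hperm.subset
          rcases hiQ with rfl | rfl | h
          · exact List.mem_append_right _ (by simp)
          · exact List.mem_append_right _ (by simp)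
          · exact List.mem_append_right _ (by simp [h])
        have hip' : i ∈ p' := by
          rcases List.mem_append.mp (hperm'.symm.subset hiR) with h | h
          · exact h
          · exfalso
            rcases List.mem_cons.mp h with h' | h'
            · exact hiQ'.1 h'
            · rcases List.mem_cons.mp h' with h'' | h''
              · exact hiQ'.2.1 h''
              · exact hiQ'.2.2 h''
        have hprevals : ∀ x ∈ p'.map v, x = 1 ∨ x = E22 := by
          intro x hx
          obtain ⟨i', hi', rfl⟩ := List.mem_map.mp hx
          have hi'j : i' ≠ j := by
            rintro rfl
            refine hdisj' _ hi' _ ?_ rfl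
            rcases hjin with rfl | rfl | h'
            · simp
            · simp
            · simp [h']
          by_cases h2 : i' = k ∨ i' ∈ t
          · right; exact vsub_E22 hi'j h2
          · left; exact vsub_one hi'j h2
        have hE22mem : E22 ∈ p'.map v := List.mem_map.mpr ⟨i, hip', hiE⟩
        obtain ⟨z, hz⟩ := pair_zsmul_E12 (hv' j' (by simp)) (hv' k' (by simp))
        rw [List.map_cons, commList_cons, hz]
        obtain ⟨z', hz'⟩ := commList_zsmul_E12 (t'.map v)
          (fun x hx => by
            obtain ⟨i', hi', rfl⟩ := List.mem_map.mp hx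
            exact hv' i' (by simp [hi'])) z
        rw [hz']
        exact prod_with_E22_smul_E12 (p'.map v) hprevals hE22mem z'
    · -- j is not among the commutator entries : head pair is diagonal
      left
      push_neg at hjin
      obtain ⟨hj1, hj2, hj3⟩ := hjin
      have hvj' : v j' = E22 := by
        rcases hA j' (by simp) with h | h | h
        · exact absurd h.symm hj1
        · exact h ▸ vsub_E22 hkj_ne (Or.inl rfl)
        · exact vsub_E22 (fun he => hjt (he ▸ h)) (Or.inr h)
      have hvk' : v k' = E22 := by
        rcases hA k' (by simp) with h | h | h
        · exact absurd h.symm hj2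
        · exact h ▸ vsub_E22 hkj_ne (Or.inl rfl)
        · exact vsub_E22 (fun he => hjt (he ▸ h)) (Or.inr h)
      rw [List.map_cons, commList_cons, hvj', hvk', sub_self, commList_zero, mul_zero]
  · -- some commutator entry is outside Q : it evaluates to 1
    left
    push_neg at hA
    obtain ⟨i, hi, hiQ⟩ := hA
    have hv1 : v i = 1 := by
      refine vsub_one hiQ.1 ?_
      rintro (h | h)
      · exact hiQ.2.1 h
      · exact hiQ.2.2 h
    suffices hz : commList (v j') ((k' :: t').map v) = 0 by rw [hz, mul_zero]
    rcases List.mem_cons.mp hi with rfl | hi'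
    · rw [hv1, List.map_cons]
      exact commList_one_head _ _
    · exact commList_one_mem _ _ (List.mem_map.mpr ⟨i, hi', hv1⟩)

/-! ### Part 6: independence and final assembly -/

theorem indep {n : ℕ} {g : FA} (hg : g ∈ AddSubgroup.closure (Bset n))
    (hid : g ∈ IdA (UT2 ℚ)) : g = 0 := by
  have hg' : g ∈ Submodule.span ℤ (Bset n) := by
    rw [← Submodule.mem_toAddSubgroup, Submodule.span_int_eq_addSubgroupClosure]
    exact hg
  obtain ⟨c, hsupp, hsum⟩ := Submodule.mem_span_set.mp hg'
  have hidv : ∀ v : ℕ → UT2 ℚ, FreeAlgebra.lift ℤ v g = 0 := hid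
  have evalsum : ∀ v : ℕ → UT2 ℚ,
      (c.sum fun w z => z • FreeAlgebra.lift ℤ v w) = 0 := by
    intro v
    rw [← hidv v, ← hsum, map_finsuppSum]
    congr 1
    ext w z
    rw [map_zsmul]
  -- Step A : the coefficient of the straight monomial vanishes
  have hA : c (mono (List.range n)) = 0 := by
    have h0 := evalsum (fun _ => 1)
    rw [Finsupp.sum_eq_single (mono (List.range n))] at h0
    · have h1 : FreeAlgebra.lift ℤ (fun _ => (1 : UT2 ℚ)) (mono (List.range n)) = 1 := by
        rw [eval_mono]
        apply List.prod_eq_one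
        intro x hx
        obtain ⟨i, _, rfl⟩ := List.mem_map.mp hx
        rfl
      rw [h1] at h0
      exact zsmul_one_eq_zero h0
    · intro b hb hbne
      have hbB : b ∈ Bset n := hsupp (Finsupp.mem_support_iff.mpr hb)
      rcases hbB with hbz | ⟨p, j, k, t, _, _, _, _, _, rfl⟩
      · exact absurd hbz hbne
      · have he : FreeAlgebra.lift ℤ (fun _ => (1 : UT2 ℚ)) (mono p * lw (j :: k :: t)) = 0 := by
          rw [map_mul, eval_lw, List.map_cons]
          show _ * commList 1 _ = 0
          rw [commList_one_head, mul_zero]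
        rw [he, smul_zero]
    · intro _
      rw [zero_smul]
  -- Step B : all coefficients vanish
  have hzero : c = 0 := by
    ext w
    rw [Finsupp.coe_zero, Pi.zero_apply]
    by_cases hw : w ∈ c.support
    · have hwB : w ∈ Bset n := hsupp hw
      rcases hwB with hwz | ⟨p, j, k, t, hperm, hsp, hst, hkj, hkt, hww⟩
      · rw [hwz]; exact hA
      · have hnd : (p ++ j :: k :: t).Nodup := hperm.nodup_iff.mpr List.nodup_range
        have h0 := evalsum (vsub j k t)
        rw [Finsupp.sum_eq_single (mono p * lw (j :: k :: t))] at h0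
        · rw [evtarget hnd] at h0
          rw [hww]
          exact zsmul_E12_eq_zero h0
        · intro b hb hbne
          have hbB : b ∈ Bset n := hsupp (Finsupp.mem_support_iff.mpr hb)
          rcases hbB with hbz | ⟨p', j', k', t', hperm', hsp', hst', hkj', hkt', rfl⟩
          · rw [hbz, hA, zero_smul]
          · rcases evother hperm hkj hkt hsp hst hperm' hkj' hkt' hsp' hst' with h | h
            · rw [h, smul_zero]
            · exact absurd (by rw [h.1, h.2.1, h.2.2.1, h.2.2.2]) hbne
        · intro _
          rw [zero_smul]
    · exact Finsupp.notMem_support_iff.mp hw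
  rw [← hsum, hzero, Finsupp.sum_zero_index]

theorem stmt_13 (n : ℕ) (hn : 1 ≤ n) :
    ∀ f ∈ Pn n,
      (f ∈ IdA (UT2 ℚ) ↔
        f ∈ tsIdeal {w | ∃ a b c d : FA, w = (a * b - b * a) * (c * d - d * c)}) := by
  intro f hf
  have hSgen : {w | ∃ a b c d : FA, w = (a * b - b * a) * (c * d - d * c)} = Sgen := rfl
  rw [hSgen]
  constructor
  · intro hfId
    have hG := Pn_le_G n hf
    rw [Gg, AddSubgroup.mem_sup] at hG
    obtain ⟨i, hi, g, hg, hig⟩ := hG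
    have hgf : g = f - i := by rw [← hig]; abel
    have hgId : g ∈ IdA (UT2 ℚ) := by
      rw [hgf]
      exact sub_mem hfId (Ii_le_IdA hi)
    have hg0 : g = 0 := indep hg hgId
    have hfi : f = i := by rw [← hig, hg0, add_zero]
    rw [hfi]
    exact hi
  · intro hfI
    exact Ii_le_IdA hfI
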